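/- For every D ≥ 1 and every assignment of real coefficients α_I to the nonempty subsets I of Fin D, the 2^D × 2^D unitary exp(−j · ∑_{∅ ≠ I ⊆ Fin D} α_I · Z_I) can be written as a product of at most (D−1)·2^D + 1 matrices, each of which is either a CNOT gate CNOT_{c,t} (for some c ≠ t in Fin D) or a single-qubit rotation exp(−j·θ·Z_{{q}}) (for some q ∈ Fin D and θ ∈ ℝ). -/

import Mathlib

open Matrix

noncomputable section

/-- The Pauli-Z monomial `Z_S`: the `2^n × 2^n` diagonal matrix (rows and columns indexed
by bitstrings `x : Fin n → Bool`) whose diagonal entry at `x` is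
`(-1) ^ |{i ∈ S : x i = true}|`. -/
def PauliZ {n : ℕ} (S : Finset (Fin n)) : Matrix (Fin n → Bool) (Fin n → Bool) ℂ :=
  Matrix.diagonal fun x => (-1 : ℂ) ^ (S.filter fun i => x i = true).card

/-- The action of `CNOT c t` on bitstrings: flip bit `t` when bit `c` is set. -/
def cnotFun {n : ℕ} (c t : Fin n) (x : Fin n → Bool) : Fin n → Bool :=
  Function.update x t (xor (x t) (x c))

/-- The CNOT gate with control `c` and target `t`: the permutation matrix sending the
standard basis vector `e_x` to `e_(cnotFun c t x)`. -/
def CNOT {n : ℕ} (c t : Fin n) : Matrix (Fin n → Bool) (Fin n → Bool) ℂ :=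
  Matrix.of fun y x => if y = cnotFun c t x then 1 else 0

namespace MonoSynth

variable {n : ℕ}

/-- diagonal entry function of `PauliZ` in product form -/
def pz (S : Finset (Fin n)) (x : Fin n → Bool) : ℂ :=
  ∏ i ∈ S, (if x i = true then (-1 : ℂ) else 1)

lemma pauliZ_eq (S : Finset (Fin n)) : PauliZ S = Matrix.diagonal (pz S) := by
  have h : (fun x : Fin n → Bool => (-1 : ℂ) ^ (S.filter fun i => x i = true).card) = pz S := by
    funext x
    rw [pz, ← Finset.prod_filter, Finset.prod_const]
  rw [PauliZ, h]

lemma cnotFun_apply_ne (c t : Fin n) {i : Fin n} (hi : i ≠ t) (x : Fin n → Bool) :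
    cnotFun c t x i = x i := Function.update_of_ne hi _ _

lemma cnotFun_apply_t (c t : Fin n) (x : Fin n → Bool) :
    cnotFun c t x t = xor (x t) (x c) := Function.update_self _ _ _

lemma cnotFun_invol (c t : Fin n) (h : c ≠ t) (x : Fin n → Bool) :
    cnotFun c t (cnotFun c t x) = x := by
  funext i
  by_cases hi : i = t
  · subst hi
    rw [cnotFun_apply_t, cnotFun_apply_t, cnotFun_apply_ne c i h]
    cases x i <;> cases x c <;> rfl
  · rw [cnotFun_apply_ne c t hi, cnotFun_apply_ne c t hi]

lemma mul_CNOT (c t : Fin n) (M : Matrix (Fin n → Bool) (Fin n → Bool) ℂ) :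
    M * CNOT c t = Matrix.of (fun y x => M y (cnotFun c t x)) := by
  ext y x
  simp [CNOT, Matrix.mul_apply]

lemma CNOT_mul (c t : Fin n) (h : c ≠ t) (M : Matrix (Fin n → Bool) (Fin n → Bool) ℂ) :
    CNOT c t * M = Matrix.of (fun y x => M (cnotFun c t y) x) := by
  ext y x
  have key : ∀ z, (y = cnotFun c t z) ↔ (z = cnotFun c t y) := by
    intro z
    constructor
    · rintro rfl; rw [cnotFun_invol c t h]
    · rintro rfl; rw [cnotFun_invol c t h]
  simp only [CNOT, Matrix.mul_apply, Matrix.of_apply]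
  simp_rw [key]
  simp

lemma CNOT_mul_CNOT (c t : Fin n) (h : c ≠ t) : CNOT c t * CNOT c t = 1 := by
  rw [CNOT_mul c t h]
  ext y x
  simp only [CNOT, Matrix.of_apply, Matrix.one_apply]
  have : (cnotFun c t y = cnotFun c t x) ↔ y = x := by
    constructor
    · intro hh
      have := congrArg (cnotFun c t) hh
      rwa [cnotFun_invol c t h, cnotFun_invol c t h] at this
    · rintro rfl; rfl
  simp [this, eq_comm]

lemma CNOT_conj_diagonal (c t : Fin n) (h : c ≠ t) (d : (Fin n → Bool) → ℂ) :
    CNOT c t * Matrix.diagonal d * CNOT c t =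
      Matrix.diagonal (fun x => d (cnotFun c t x)) := by
  rw [CNOT_mul c t h, mul_CNOT]
  ext y x
  simp only [Matrix.of_apply, Matrix.diagonal_apply]
  have : (cnotFun c t y = cnotFun c t x) ↔ y = x := by
    constructor
    · intro hh
      have := congrArg (cnotFun c t) hh
      rwa [cnotFun_invol c t h, cnotFun_invol c t h] at this
    · rintro rfl; rfl
  by_cases hyx : y = x
  · subst hyx; simp
  · simp [hyx, this]

lemma g_xor (a b : Bool) :
    (if (xor a b) = true then (-1 : ℂ) else 1)
      = (if a = true then (-1 : ℂ) else 1) * (if b = true then (-1 : ℂ) else 1) := by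
  cases a <;> cases b <;> norm_num

lemma pz_cnot {S : Finset (Fin n)} {c t : Fin n} (ht : t ∈ S) (hc : c ∉ S) (hct : c ≠ t)
    (x : Fin n → Bool) : pz S (cnotFun c t x) = pz (insert c S) x := by
  unfold pz
  have hc' : c ∉ insert t (S.erase t) := by rw [Finset.insert_erase ht]; exact hc
  rw [Finset.prod_insert hc]
  rw [← Finset.insert_erase ht, Finset.prod_insert (Finset.notMem_erase t S),
    Finset.prod_insert (Finset.notMem_erase t S)]
  have h1 : cnotFun c t x t = xor (x t) (x c) := by simp [cnotFun]
  have h2 : ∀ i ∈ S.erase t, cnotFun c t x i = x i := by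
    intro i hi
    exact Function.update_of_ne (Finset.ne_of_mem_erase hi) _ _
  rw [h1, g_xor, Finset.prod_congr rfl (fun i hi => by rw [h2 i hi])]
  ring

lemma CNOT_conj_pauliZ {S : Finset (Fin n)} {c t : Fin n} (ht : t ∈ S) (hc : c ∉ S)
    (hct : c ≠ t) : CNOT c t * PauliZ S * CNOT c t = PauliZ (insert c S) := by
  rw [pauliZ_eq, pauliZ_eq, CNOT_conj_diagonal c t hct]
  exact congrArg Matrix.diagonal (funext fun x => pz_cnot ht hc hct x)

lemma CNOT_conj_exp {S : Finset (Fin n)} {c t : Fin n} (ht : t ∈ S) (hc : c ∉ S)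
    (hct : c ≠ t) (z : ℂ) :
    CNOT c t * NormedSpace.exp (z • PauliZ S) * CNOT c t
      = NormedSpace.exp (z • PauliZ (insert c S)) := by
  have hU : CNOT c t * CNOT c t = 1 := CNOT_mul_CNOT c t hct
  have hinv : (CNOT c t)⁻¹ = CNOT c t := Matrix.inv_eq_right_inv hU
  calc CNOT c t * NormedSpace.exp (z • PauliZ S) * CNOT c t
      = CNOT c t * NormedSpace.exp (z • PauliZ S) * (CNOT c t)⁻¹ := by rw [hinv]
    _ = NormedSpace.exp (CNOT c t * (z • PauliZ S) * (CNOT c t)⁻¹) :=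
        (Matrix.exp_conj (CNOT c t) _ ⟨⟨CNOT c t, CNOT c t, hU, hU⟩, rfl⟩).symm
    _ = NormedSpace.exp (z • (CNOT c t * PauliZ S * CNOT c t)) := by
        rw [hinv, Matrix.mul_smul, Matrix.smul_mul]
    _ = NormedSpace.exp (z • PauliZ (insert c S)) := by
        rw [CNOT_conj_pauliZ ht hc hct]

lemma chain (q : Fin n) (z : ℂ) :
    ∀ l : List (Fin n), l.Nodup → q ∉ l →
    ((l.map fun c => CNOT c q).prod) * NormedSpace.exp (z • PauliZ {q}) *
      ((l.reverse.map fun c => CNOT c q).prod)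
      = NormedSpace.exp (z • PauliZ (insert q l.toFinset))
  | [], _, _ => by simp
  | c :: l, hnd, hq => by
    have hql : q ∉ l := fun h => hq (List.mem_cons_of_mem _ h)
    have hqc : c ≠ q := fun h => hq (h ▸ List.mem_cons_self)
    have hcl : c ∉ l := (List.nodup_cons.mp hnd).1
    have ih := chain q z l (List.nodup_cons.mp hnd).2 hql
    have hcS : c ∉ insert q l.toFinset := by
      simp [Finset.mem_insert, hqc, hcl]
    have hqS : q ∈ insert q l.toFinset := Finset.mem_insert_self _ _
    calc ((List.map (fun c => CNOT c q) (c :: l)).prod) *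
          NormedSpace.exp (z • PauliZ {q}) *
          ((List.map (fun c => CNOT c q) (c :: l).reverse).prod)
        = CNOT c q * (((l.map fun c => CNOT c q).prod) *
            NormedSpace.exp (z • PauliZ {q}) *
            ((l.reverse.map fun c => CNOT c q).prod)) * CNOT c q := by
          simp only [List.map_cons, List.prod_cons, List.reverse_cons, List.map_append,
            List.prod_append, List.map_cons, List.map_nil, List.prod_cons, List.prod_nil,
            mul_one]
          noncomm_ring
      _ = CNOT c q * NormedSpace.exp (z • PauliZ (insert q l.toFinset)) * CNOT c q := by
          rw [ih]
      _ = NormedSpace.exp (z • PauliZ (insert c (insert q l.toFinset))) :=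
          CNOT_conj_exp hqS hcS hqc z
      _ = NormedSpace.exp (z • PauliZ (insert q (c :: l).toFinset)) := by
          rw [List.toFinset_cons, Finset.insert_comm]


/-- Picks an element of `I` (its minimum) when `I` is nonempty. -/
def pick (hn : 0 < n) (I : Finset (Fin n)) : Fin n :=
  if h : I.Nonempty then I.min' h else ⟨0, hn⟩

lemma pick_mem (hn : 0 < n) {I : Finset (Fin n)} (hI : I.Nonempty) : pick hn I ∈ I := by
  rw [pick, dif_pos hI]; exact I.min'_mem hI

/-- The gate list synthesizing `exp(-i α_I Z_I)`. -/
def block (hn : 0 < n) (α : Finset (Fin n) → ℝ) (I : Finset (Fin n)) :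
    List (Matrix (Fin n → Bool) (Fin n → Bool) ℂ) :=
  ((I.erase (pick hn I)).toList.map fun c => CNOT c (pick hn I)) ++
  (NormedSpace.exp ((-Complex.I * (α I : ℂ)) • PauliZ {pick hn I}) ::
  ((I.erase (pick hn I)).toList.reverse.map fun c => CNOT c (pick hn I)))

lemma block_length (hn : 0 < n) (α : Finset (Fin n) → ℝ) {I : Finset (Fin n)}
    (hI : I.Nonempty) : (block hn α I).length = 2 * (I.card - 1) + 1 := by
  simp [block, Finset.card_erase_of_mem (pick_mem hn hI)]
  omega

lemma block_mem (hn : 0 < n) (α : Finset (Fin n) → ℝ) (I : Finset (Fin n)) :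
    ∀ A ∈ block hn α I,
      (∃ c t : Fin n, c ≠ t ∧ A = CNOT c t) ∨
      (∃ (q : Fin n) (θ : ℝ),
        A = NormedSpace.exp ((-Complex.I * (θ : ℂ)) • PauliZ {q})) := by
  intro A hA
  rw [block, List.mem_append, List.mem_cons] at hA
  rcases hA with hA | hA | hA
  · rw [List.mem_map] at hA
    obtain ⟨c, hc, rfl⟩ := hA
    rw [Finset.mem_toList, Finset.mem_erase] at hc
    exact Or.inl ⟨c, pick hn I, hc.1, rfl⟩
  · exact Or.inr ⟨pick hn I, α I, hA⟩
  · rw [List.mem_map] at hA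
    obtain ⟨c, hc, rfl⟩ := hA
    rw [List.mem_reverse, Finset.mem_toList, Finset.mem_erase] at hc
    exact Or.inl ⟨c, pick hn I, hc.1, rfl⟩

lemma block_prod (hn : 0 < n) (α : Finset (Fin n) → ℝ) {I : Finset (Fin n)}
    (hI : I.Nonempty) :
    (block hn α I).prod = NormedSpace.exp ((-Complex.I * (α I : ℂ)) • PauliZ I) := by
  have hq : pick hn I ∈ I := pick_mem hn hI
  have h3 := chain (pick hn I) (-Complex.I * (α I : ℂ)) (I.erase (pick hn I)).toList
    (Finset.nodup_toList _)
    (by rw [Finset.mem_toList]; exact Finset.notMem_erase _ _)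
  rw [Finset.toList_toFinset, Finset.insert_erase hq] at h3
  rw [block, List.prod_append, List.prod_cons, ← mul_assoc]
  exact h3

lemma exp_smul_pauli (z : ℂ) (S : Finset (Fin n)) :
    NormedSpace.exp (z • PauliZ S)
      = Matrix.diagonal (fun x => Complex.exp (z * pz S x)) := by
  have h1 : z • PauliZ S = Matrix.diagonal (fun x => z * pz S x) := by
    rw [pauliZ_eq, ← Matrix.diagonal_smul]
    rfl
  rw [h1, Matrix.exp_diagonal]
  exact congrArg Matrix.diagonal (funext fun x => by
    rw [Pi.coe_exp, ← Complex.exp_eq_exp_ℂ])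

lemma list_prod_blocks (hn : 0 < n) (α : Finset (Fin n) → ℝ) :
    ∀ l : List (Finset (Fin n)), (∀ I ∈ l, I.Nonempty) →
      ((l.map (block hn α)).flatten).prod
        = Matrix.diagonal
            (fun x => (l.map fun I => Complex.exp (-Complex.I * (α I : ℂ) * pz I x)).prod)
  | [], _ => by simp [Matrix.diagonal_one]
  | I :: l, h => by
    have hI : I.Nonempty := h I (List.mem_cons_self)
    have ih := list_prod_blocks hn α l fun J hJ => h J (List.mem_cons_of_mem _ hJ)
    rw [List.map_cons, List.flatten_cons, List.prod_append, ih, block_prod hn α hI,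
      exp_smul_pauli, Matrix.diagonal_mul_diagonal]
    exact congrArg Matrix.diagonal (funext fun x => by
      rw [List.map_cons, List.prod_cons])

lemma sum_card_powerset {β : Type*} [DecidableEq β] (s : Finset β) :
    ∑ t ∈ s.powerset, t.card = s.card * 2 ^ (s.card - 1) := by
  induction s using Finset.induction_on with
  | empty => simp
  | @insert a s ha ih =>
    rw [Finset.sum_powerset_insert ha]
    have hcong : ∀ t ∈ s.powerset, (insert a t).card = t.card + 1 := fun t ht =>
      Finset.card_insert_of_notMem fun h => ha (Finset.mem_powerset.mp ht h)
    rw [Finset.sum_congr rfl hcong, Finset.sum_add_distrib, Finset.sum_const,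
      Finset.card_powerset, ih, Finset.card_insert_of_notMem ha]
    cases hk : s.card with
    | zero => norm_num
    | succ m =>
      simp only [Nat.add_sub_cancel, smul_eq_mul, mul_one]
      rw [pow_succ]
      ring

end MonoSynth

open MonoSynth

/-- For every `D ≥ 1` and real coefficients `α I` on the nonempty subsets
`I` of `Fin D`, the unitary `exp(-j ∑_{∅ ≠ I ⊆ Fin D} α_I Z_I)` is a product of at most
`(D-1)·2^D + 1` matrices, each of which is a CNOT gate or a single-qubit Z-rotation
`exp(-j·θ·Z_{{q}})`. -/
theorem monomial_hamiltonian_synthesis {D : ℕ} (hD : 1 ≤ D)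
    (α : Finset (Fin D) → ℝ) :
    ∃ L : List (Matrix (Fin D → Bool) (Fin D → Bool) ℂ),
      L.length ≤ (D - 1) * 2 ^ D + 1 ∧
      (∀ A ∈ L,
        (∃ c t : Fin D, c ≠ t ∧ A = CNOT c t) ∨
        (∃ (q : Fin D) (θ : ℝ),
          A = NormedSpace.exp ((-Complex.I * (θ : ℂ)) • PauliZ {q}))) ∧
      L.prod = NormedSpace.exp ((-Complex.I) •
        ∑ I ∈ Finset.univ.filter (fun I : Finset (Fin D) => I.Nonempty),
          (α I : ℂ) • PauliZ I) := by
  classical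
  have hn : 0 < D := hD
  set 𝒮 := Finset.univ.filter (fun I : Finset (Fin D) => I.Nonempty) with h𝒮
  have hmem𝒮 : ∀ I ∈ 𝒮.toList, I.Nonempty := fun I hI =>
    (Finset.mem_filter.mp (Finset.mem_toList.mp hI)).2
  refine ⟨(𝒮.toList.map (block hn α)).flatten, ?_, ?_, ?_⟩
  · -- length bound
    rw [List.length_flatten, List.map_map]
    have h1 : 𝒮.toList.map (List.length ∘ block hn α)
        = 𝒮.toList.map (fun I => 2 * (I.card - 1) + 1) :=
      List.map_congr_left fun I hI => block_length hn α (hmem𝒮 I hI)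
    rw [h1, Finset.sum_map_toList]
    -- counting
    have hpow : ∑ I : Finset (Fin D), I.card = D * 2 ^ (D - 1) := by
      have h := sum_card_powerset (Finset.univ : Finset (Fin D))
      rwa [Finset.powerset_univ, Finset.card_univ, Fintype.card_fin] at h
    have h𝒮' : 𝒮 = (Finset.univ : Finset (Finset (Fin D))).erase ∅ := by
      ext I
      simp [h𝒮, Finset.nonempty_iff_ne_empty]
    have hcard𝒮 : 𝒮.card = 2 ^ D - 1 := by
      rw [h𝒮', Finset.card_erase_of_mem (Finset.mem_univ _), Finset.card_univ,
        Fintype.card_finset, Fintype.card_fin]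
    have hsum𝒮 : ∑ I ∈ 𝒮, I.card = D * 2 ^ (D - 1) := by
      rw [h𝒮', Finset.sum_erase _ (by simp)]
      simpa using hpow
    have hkey : (∑ I ∈ 𝒮, (2 * (I.card - 1) + 1)) + 𝒮.card = 2 * ∑ I ∈ 𝒮, I.card := by
      rw [Finset.card_eq_sum_ones, ← Finset.sum_add_distrib, Finset.mul_sum]
      refine Finset.sum_congr rfl fun I hI => ?_
      have h1 : 1 ≤ I.card := Finset.card_pos.mpr (Finset.mem_filter.mp hI).2
      omega
    obtain ⟨d, rfl⟩ : ∃ d, D = d + 1 := ⟨D - 1, by omega⟩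
    rw [hcard𝒮, hsum𝒮] at hkey
    have h2 : 2 * ((d + 1) * 2 ^ (d + 1 - 1)) = (d + 1) * 2 ^ (d + 1) := by
      simp only [Nat.add_sub_cancel, pow_succ]
      ring
    rw [h2] at hkey
    simp only [Nat.add_sub_cancel]
    have hN : 1 ≤ 2 ^ (d + 1) := Nat.one_le_two_pow
    generalize hNv : 2 ^ (d + 1) = N at hkey hN ⊢
    have h3 : (d + 1) * N = d * N + N := by ring
    rw [h3] at hkey
    generalize d * N = M at hkey ⊢
    omega
  · -- gate shapes
    intro A hA
    rw [List.mem_flatten] at hA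
    obtain ⟨b, hb, hAb⟩ := hA
    rw [List.mem_map] at hb
    obtain ⟨I, _, rfl⟩ := hb
    exact block_mem hn α I A hAb
  · -- product
    rw [list_prod_blocks hn α _ hmem𝒮]
    have hdsum : (∑ I ∈ 𝒮, (α I : ℂ) • PauliZ I)
        = Matrix.diagonal (fun x => ∑ I ∈ 𝒮, (α I : ℂ) * pz I x) := by
      ext y x'
      rw [Matrix.sum_apply]
      by_cases hyx : y = x'
      · subst hyx
        rw [Matrix.diagonal_apply_eq]
        refine Finset.sum_congr rfl fun I _ => ?_
        rw [Matrix.smul_apply, pauliZ_eq, Matrix.diagonal_apply_eq, smul_eq_mul]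
      · rw [Matrix.diagonal_apply_ne _ hyx]
        refine Finset.sum_eq_zero fun I _ => ?_
        rw [Matrix.smul_apply, pauliZ_eq, Matrix.diagonal_apply_ne _ hyx, smul_zero]
    rw [hdsum]
    have h2 : (-Complex.I) • Matrix.diagonal (fun x => ∑ I ∈ 𝒮, (α I : ℂ) * pz I x)
        = Matrix.diagonal (fun x => -Complex.I * ∑ I ∈ 𝒮, (α I : ℂ) * pz I x) := by
      rw [← Matrix.diagonal_smul]
      rfl
    rw [h2, Matrix.exp_diagonal]
    refine congrArg Matrix.diagonal (funext fun x => ?_)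
    rw [Pi.coe_exp, ← Complex.exp_eq_exp_ℂ, Finset.mul_sum]
    rw [Complex.exp_sum]
    rw [← Finset.prod_map_toList]
    congr 1
    refine List.map_congr_left fun I _ => ?_
    rw [mul_assoc]
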